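/- Let p be a prime, R a commutative F_p-algebra, λ, a ∈ R with a invertible in R/(λ). Then C = R[X, 1/(a+λX)] is a faithfully flat R-algebra. -/

import Mathlib

open Polynomial

/-- If `a` is invertible in `R/(λ)`, then `C = R[X, 1/(a+λX)]` is a faithfully flat
`R`-algebra. -/
theorem stmt13 (p : ℕ) [Fact p.Prime]
    (R : Type*) [CommRing R] [CharP R p] (lam a : R)
    (ha : IsUnit (Ideal.Quotient.mk (Ideal.span {lam}) a)) :
    Module.FaithfullyFlat R
      (Localization.Away (Polynomial.C a + Polynomial.C lam * (X : Polynomial R))) := by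
  set f : R[X] := Polynomial.C a + Polynomial.C lam * X with hf
  set Cl := Localization.Away f
  have hflat : Module.Flat R Cl := by
    have h1 : Module.Free R R[X] :=
      Module.Free.of_equiv (M := AddMonoidAlgebra R ℕ) (Polynomial.toFinsuppIsoAlg R).toLinearEquiv.symm
    have h2 : Module.Flat R R[X] := Module.Flat.of_free
    exact Module.Flat.trans R R[X] _
  refine ⟨fun m hm hcontra => ?_⟩
  -- set up the residue field
  letI : m.IsMaximal := hm
  let K := R ⧸ m
  let q : R →+* K := Ideal.Quotient.mk m
  let g : K[X] := f.map q
  -- g ≠ 0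
  have hg : g ≠ 0 := by
    intro h
    have h1 : q lam = 0 := by
      have := congrArg (fun s => Polynomial.coeff s 1) h
      simpa [g, f, Polynomial.coeff_map] using this
    have h0 : q a = 0 := by
      have := congrArg (fun s => Polynomial.coeff s 0) h
      simpa [g, f, Polynomial.coeff_map] using this
    have hlm : lam ∈ m := Ideal.Quotient.eq_zero_iff_mem.mp h1
    have hle : Ideal.span {lam} ≤ m := by
      rwa [Ideal.span_le, Set.singleton_subset_iff]
    have : IsUnit (q a) := by
      have := ha.map (Ideal.Quotient.factor hle)
      rwa [Ideal.Quotient.factor_mk] at this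
    exact this.ne_zero h0
  -- the localization of K[X] away from g
  let L := Localization.Away g
  have hinj : Function.Injective (algebraMap K[X] L) := by
    apply IsLocalization.injective (M := Submonoid.powers g)
    intro x hx
    obtain ⟨n, rfl⟩ := hx
    exact mem_nonZeroDivisors_of_ne_zero (pow_ne_zero n hg)
  haveI : Nontrivial L := ⟨algebraMap K[X] L 0, algebraMap K[X] L 1,
    fun h => zero_ne_one (hinj h)⟩
  -- the map C → L
  have hunit : IsUnit (((algebraMap K[X] L).comp (Polynomial.mapRingHom q)) f) := by
    simpa [g] using IsLocalization.Away.algebraMap_isUnit (S := L) g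
  let φ : Cl →+* L := Localization.awayLift ((algebraMap K[X] L).comp (Polynomial.mapRingHom q)) f hunit
  have hφ : ∀ r : R, φ (algebraMap R Cl r) = algebraMap K[X] L (Polynomial.C (q r)) := by
    intro r
    have : algebraMap R Cl r = algebraMap R[X] Cl (Polynomial.C r) := by
      rw [IsScalarTower.algebraMap_apply R R[X] Cl, Polynomial.algebraMap_eq]
    rw [this]
    simp [φ, Localization.awayLift, IsLocalization.Away.lift, IsLocalization.lift_eq]
  -- every element of m • ⊤ maps to 0 under φ
  have hzero : ∀ x : Cl, x ∈ (m • (⊤ : Submodule R Cl)) → φ x = 0 := by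
    intro x hx
    refine Submodule.smul_induction_on hx ?_ ?_
    · intro r hr c _
      have : r • c = algebraMap R Cl r * c := Algebra.smul_def r c
      rw [this, map_mul, hφ r, Ideal.Quotient.eq_zero_iff_mem.mpr hr]
      simp
    · intro x y hx hy
      rw [map_add, hx, hy, add_zero]
  have h1 : (1 : Cl) ∈ m • (⊤ : Submodule R Cl) := by rw [hcontra]; trivial
  have := hzero 1 h1
  rw [map_one] at this
  exact one_ne_zero this
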